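/- arXiv:1602.07445 — 2 statements merged into one kernel-verified Lean document; each statement's English description precedes it below -/
import Mathlib

section
/- Let I : ℂ × ℂ → ℂ be analytic on a neighborhood of (0,0) with I(x, I(x,y)) = y for all (x,y) near (0,0) and ∂I/∂y(0,0) = −1. Define h(x,y) := x + (y − I(x,y))/2. Then: (i) h is analytic near (0,0) and h(x, I(x,y)) = 2x − h(x,y) for all (x,y) near (0,0), i.e., for each fixed x the map h(x,·) conjugates the involution I(x,·) to the model involution y ↦ 2x − y; (ii) the map H(x,y) = (x, h(x,y)) is a local biholomorphism at (0,0); (iii) if ℓ is analytic near 0 with I(x, ℓ(x)) = ℓ(x) for all x near 0, then h(x, ℓ(x)) = x, so H sends the fixed-point curve of the family of involutions I(x,·) to the fixed-point curve {y = x} of the model involutions. -/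
open Filter Topology

noncomputable def shearEquiv (a : ℂ) : (ℂ × ℂ) ≃L[ℂ] (ℂ × ℂ) :=
  LinearEquiv.toContinuousLinearEquiv
  { toFun := fun p => (p.1, a * p.1 + p.2)
    map_add' := by intro p q; simp [Prod.ext_iff]; ring
    map_smul' := by intro c p; simp [Prod.ext_iff, smul_eq_mul]; ring
    invFun := fun p => (p.1, p.2 - a * p.1)
    left_inv := by intro p; simp [Prod.ext_iff]
    right_inv := by intro p; simp [Prod.ext_iff] }

theorem shearEquiv_apply (a : ℂ) (p : ℂ × ℂ) :
    (shearEquiv a : (ℂ × ℂ) →L[ℂ] (ℂ × ℂ)) p = (p.1, a * p.1 + p.2) := rfl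

/-- Linearization of an analytic family of involutions `I (x, ·)` with `∂I/∂y (0,0) = -1`:
the map `h (x,y) = x + (y - I (x,y))/2` conjugates each `I (x, ·)` to `y ↦ 2x - y`,
`H (x,y) = (x, h (x,y))` is a local biholomorphism at `(0,0)`, and `H` sends the
fixed-point curve of the family to the diagonal `{y = x}`. -/
theorem family_involution_linearization (I : ℂ × ℂ → ℂ)
    (hI : AnalyticAt ℂ I (0, 0))
    (hinv : ∀ᶠ p : ℂ × ℂ in 𝓝 (0, 0), I (p.1, I p) = p.2)
    (hd : deriv (fun y : ℂ => I (0, y)) 0 = -1)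
    (h : ℂ × ℂ → ℂ) (hh : ∀ p : ℂ × ℂ, h p = p.1 + (p.2 - I p) / 2)
    (H : ℂ × ℂ → ℂ × ℂ) (hH : ∀ p : ℂ × ℂ, H p = (p.1, h p)) :
    -- (i) `h` is analytic and conjugates `I (x, ·)` to the model involution `y ↦ 2x - y`
    (AnalyticAt ℂ h (0, 0) ∧
      ∀ᶠ p : ℂ × ℂ in 𝓝 (0, 0), h (p.1, I p) = 2 * p.1 - h p) ∧
    -- (ii) `H` is a local biholomorphism at `(0,0)`
    (∃ G : ℂ × ℂ → ℂ × ℂ, AnalyticAt ℂ G (H (0, 0)) ∧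
      (∀ᶠ p : ℂ × ℂ in 𝓝 (0, 0), G (H p) = p) ∧
      (∀ᶠ q : ℂ × ℂ in 𝓝 (H (0, 0)), H (G q) = q)) ∧
    -- (iii) the fixed-point curve is sent to `{y = x}`
    (∀ ℓ : ℂ → ℂ, AnalyticAt ℂ ℓ 0 →
      (∀ᶠ x in 𝓝 (0 : ℂ), I (x, ℓ x) = ℓ x) →
      ∀ᶠ x in 𝓝 (0 : ℂ), h (x, ℓ x) = x) := by
  -- basic function identities
  have hfun : h = fun p : ℂ × ℂ => p.1 + (2⁻¹ : ℂ) • (p.2 - I p) := by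
    funext p; rw [hh]; simp [smul_eq_mul]; ring
  have hHfun : H = fun p : ℂ × ℂ => (p.1, h p) := funext hH
  -- analyticity of h
  have hha : AnalyticAt ℂ h (0, 0) := by
    rw [hfun]
    exact analyticAt_fst.add (analyticAt_const.fun_smul (analyticAt_snd.fun_sub hI))
  have hHa : AnalyticAt ℂ H (0, 0) := by
    rw [hHfun]; exact analyticAt_fst.prod hha
  -- the partial derivative in y of I at the origin
  have hD1 : fderiv ℂ I (0, 0) (0, 1) = -1 := by
    have hg : HasDerivAt (fun y : ℂ => ((0 : ℂ), y)) ((0 : ℂ), (1 : ℂ)) 0 :=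
      HasDerivAt.prodMk (hasDerivAt_const 0 (0 : ℂ)) (hasDerivAt_id 0)
    have h2 : HasDerivAt (fun y : ℂ => I (0, y)) (fderiv ℂ I (0, 0) (0, 1)) 0 :=
      hI.differentiableAt.hasFDerivAt.comp_hasDerivAt 0 hg
    rw [← hd]
    exact h2.deriv.symm
  set D := fderiv ℂ I (0, 0) with hDdef
  set a : ℂ := 1 - D (1, 0) / 2 with ha
  have hDp : ∀ p : ℂ × ℂ, D p = p.1 * D (1, 0) - p.2 := by
    intro p
    have hp : p = p.1 • ((1 : ℂ), (0 : ℂ)) + p.2 • ((0 : ℂ), (1 : ℂ)) := by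
      simp [Prod.ext_iff]
    conv_lhs => rw [hp]
    rw [map_add, map_smul, map_smul, hD1]
    simp [smul_eq_mul]; ring
  -- strict derivative of h
  have hIs : HasStrictFDerivAt I D (0, 0) := hI.hasStrictFDerivAt
  have hs' : HasStrictFDerivAt h
      ((ContinuousLinearMap.fst ℂ ℂ ℂ) +
        (2⁻¹ : ℂ) • ((ContinuousLinearMap.snd ℂ ℂ ℂ) - D)) (0, 0) := by
    rw [hfun]
    exact hasStrictFDerivAt_fst.add ((hasStrictFDerivAt_snd.fun_sub hIs).fun_const_smul _)
  -- strict derivative of H is the shear equivalence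
  have hsH : HasStrictFDerivAt H
      ((shearEquiv a : (ℂ × ℂ) →L[ℂ] (ℂ × ℂ))) (0, 0) := by
    have hprod := HasStrictFDerivAt.prodMk hasStrictFDerivAt_fst hs'
    have heq : (ContinuousLinearMap.fst ℂ ℂ ℂ).prod
        ((ContinuousLinearMap.fst ℂ ℂ ℂ) +
          (2⁻¹ : ℂ) • ((ContinuousLinearMap.snd ℂ ℂ ℂ) - D))
        = (shearEquiv a : (ℂ × ℂ) →L[ℂ] (ℂ × ℂ)) := by
      apply ContinuousLinearMap.ext
      intro p
      simp [shearEquiv_apply, Prod.ext_iff, hDp p, smul_eq_mul, ha]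
      ring
    rw [hHfun]
    rw [heq] at hprod
    exact hprod
  have hfd : fderiv ℂ H (0, 0) = (shearEquiv a : (ℂ × ℂ) →L[ℂ] (ℂ × ℂ)) :=
    hsH.hasFDerivAt.fderiv
  refine ⟨⟨hha, ?_⟩, ?_, ?_⟩
  · -- conjugation identity
    filter_upwards [hinv] with p hp
    rw [hh, hh]
    simp only
    rw [hp]
    ring
  · -- local biholomorphism
    set f := hsH.toOpenPartialHomeomorph H with hf
    have hcoe : (f : ℂ × ℂ → ℂ × ℂ) = H := hsH.toOpenPartialHomeomorph_coe
    have hmem : ((0 : ℂ), (0 : ℂ)) ∈ f.source := hsH.mem_toOpenPartialHomeomorph_source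
    refine ⟨f.symm, ?_, ?_, ?_⟩
    · have := f.analyticAt_symm' hmem (by rw [hcoe]; exact hHa) (by rw [hcoe]; exact hfd)
      rwa [show f ((0 : ℂ), (0 : ℂ)) = H (0, 0) from by rw [← hcoe]] at this
    · filter_upwards [f.open_source.mem_nhds hmem] with p hp
      have := f.left_inv hp
      rwa [show f p = H p from by rw [← hcoe]] at this
    · have htar : H (0, 0) ∈ f.target := by
        have := f.map_source hmem
        rwa [show f ((0 : ℂ), (0 : ℂ)) = H (0, 0) from by rw [← hcoe]] at this
      filter_upwards [f.open_target.mem_nhds htar] with q hq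
      have := f.right_inv hq
      rwa [show f (f.symm q) = H (f.symm q) from by rw [← hcoe]] at this
  · -- fixed-point curve
    intro ℓ _ hfix
    filter_upwards [hfix] with x hx
    rw [hh]
    simp only
    rw [hx]
    ring
end

section
/- Let a, t ∈ ℂ. Define P(x,y) := −y², Q(x,y) := 2x(y − x), and the pull-back coefficients under the map L(x,y) = (x, (a + tx)·y): P_t(x,y) := 2txy·((a+tx)y − x) − y²·(a+tx)² and Q_t(x,y) := 2x(a+tx)·((a+tx)y − x) (these are the dx- and dy-coefficients of the pull-back by L of the 1-form P dx + Q dy). Then the tangency function T := P·Q_t − Q·P_t factors as T(x,y) = y·G(x,y) for a polynomial G satisfying G(x,0) = −4t·x⁴ for all x ∈ ℂ. In particular, if t ≠ 0, the restriction of G to {y = 0} vanishes to order exactly 4 at x = 0. -/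
open Filter Topology

/-- Tangency between the 1-form `2x(y-x) dy - y² dx` and its pull-back by the perturbed
gluing map `L (x,y) = (x, (a + tx) y)`: the tangency function `T = P Q_t - Q P_t`
factors as `T = y G` for a polynomial `G` with `G (x, 0) = -4 t x⁴`; in particular,
if `t ≠ 0`, the restriction of `G` to `{y = 0}` vanishes to order exactly `4` at `0`. -/
theorem perturbed_tangency_order_four (a t : ℂ)
    (P Q Pt Qt T : ℂ → ℂ → ℂ)
    (hP : ∀ x y : ℂ, P x y = -y ^ 2)
    (hQ : ∀ x y : ℂ, Q x y = 2 * x * (y - x))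
    (hPt : ∀ x y : ℂ, Pt x y =
      2 * t * x * y * ((a + t * x) * y - x) - y ^ 2 * (a + t * x) ^ 2)
    (hQt : ∀ x y : ℂ, Qt x y = 2 * x * (a + t * x) * ((a + t * x) * y - x))
    (hT : ∀ x y : ℂ, T x y = P x y * Qt x y - Q x y * Pt x y) :
    ∃ G : MvPolynomial (Fin 2) ℂ,
      (∀ x y : ℂ, T x y = y * MvPolynomial.eval ![x, y] G) ∧
      (∀ x : ℂ, MvPolynomial.eval ![x, 0] G = -4 * t * x ^ 4) ∧
      (t ≠ 0 →
        (∀ k < 4, iteratedDeriv k (fun x : ℂ => MvPolynomial.eval ![x, 0] G) 0 = 0) ∧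
        iteratedDeriv 4 (fun x : ℂ => MvPolynomial.eval ![x, 0] G) 0 ≠ 0) := by
  classical
  set X0 : MvPolynomial (Fin 2) ℂ := MvPolynomial.X 0
  set X1 : MvPolynomial (Fin 2) ℂ := MvPolynomial.X 1
  set A : MvPolynomial (Fin 2) ℂ := MvPolynomial.C a + MvPolynomial.C t * X0 with hA
  refine ⟨-2*X0*X1*A*(A*X1 - X0) - 2*X0*(X1 - X0)*(2*MvPolynomial.C t*X0*(A*X1 - X0) - X1*A*A), ?_, ?_, ?_⟩
  · intro x y
    rw [hT, hP, hQ, hPt, hQt]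
    simp [hA, X0, X1]
    ring
  · intro x
    simp [hA, X0, X1]
    ring
  · intro ht
    have hfun : (fun x : ℂ => MvPolynomial.eval ![x, 0]
        (-2*X0*X1*A*(A*X1 - X0) - 2*X0*(X1 - X0)*(2*MvPolynomial.C t*X0*(A*X1 - X0) - X1*A*A)))
        = fun x : ℂ => (-4 * t) * x ^ 4 := by
      funext x
      simp [hA, X0, X1]
      ring
    rw [hfun]
    have hcd : ∀ n : ℕ, ContDiff ℂ n (fun x : ℂ => x ^ 4) := fun n => contDiff_id.pow 4
    have key : ∀ k : ℕ, iteratedDeriv k (fun x : ℂ => (-4 * t) * x ^ 4) 0 =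
        (-4 * t) * ((∏ i ∈ Finset.range k, ((4 : ℂ) - i)) * (0 : ℂ) ^ (4 - k)) := by
      intro k
      have h1 : iteratedDeriv k (fun x : ℂ => -4 * t * x ^ 4) 0 =
          (-4 * t) * iteratedDeriv k (fun x : ℂ => x ^ 4) 0 := by
        rw [← iteratedDerivWithin_univ, ← iteratedDerivWithin_univ]
        have := iteratedDerivWithin_const_mul (𝕜 := ℂ) (x := (0:ℂ)) (s := Set.univ)
          (n := k) (Set.mem_univ 0) uniqueDiffOn_univ (-4 * t) ((hcd k).contDiffWithinAt)
        simpa [mul_assoc] using this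
      rw [h1, iteratedDeriv_eq_iterate, iter_deriv_pow]; norm_num
    constructor
    · intro k hk
      rw [key k]
      have : (0 : ℂ) ^ (4 - k) = 0 := by
        apply zero_pow
        omega
      rw [this]; ring
    · rw [key 4]
      norm_num [Finset.prod_range_succ]
      exact ht
end
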